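/- arXiv:2305.09097 — 2 statements merged into one kernel-verified Lean document; each statement's English description precedes it below -/
import Mathlib

section
/- If the components X_1,...,X_n of X are mutually independent, then MRCov_{(p,q)}(X) is the diagonal matrix diag(RV_{(p_1,q_1)}(X_1), ..., RV_{(p_n,q_n)}(X_n)), where RV_{(p_k,q_k)}(X_k) := E[(X_k − RVaR_{(p_k,q_k)}(X_k))² | VaR_{p_k}(X_k) ≤ X_k ≤ VaR_{q_k}(X_k)] is the univariate range variance. -/
open MeasureTheory ProbabilityTheory

lemma aux_integral_prod {Ω : Type*} [MeasurableSpace Ω] (μ : Measure Ω) [IsProbabilityMeasure μ]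
    {n : ℕ} {g : Fin n → Ω → ℝ}
    (hIndep : iIndepFun g μ)
    (hg : ∀ k, Measurable (g k)) (C : Fin n → ℝ) (hC : ∀ k ω, |g k ω| ≤ C k)
    (s : Finset (Fin n)) :
    ∫ ω, ∏ k ∈ s, g k ω ∂μ = ∏ k ∈ s, ∫ ω, g k ω ∂μ := by
  classical
  have hint : ∀ t : Finset (Fin n), Integrable (fun ω => ∏ k ∈ t, g k ω) μ := by
    intro t
    refine Integrable.mono' (integrable_const (∏ k ∈ t, C k))
      (Finset.measurable_prod t fun k _ => hg k).aestronglyMeasurable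
      (Filter.Eventually.of_forall fun ω => ?_)
    rw [Real.norm_eq_abs, Finset.abs_prod]
    exact Finset.prod_le_prod (fun k _ => abs_nonneg _) (fun k _ => hC k ω)
  induction s using Finset.cons_induction with
  | empty => simp
  | cons i s hi ih =>
    have hprodfun : (∏ j ∈ s, g j) = fun ω => ∏ k ∈ s, g k ω := by
      funext ω; simp [Finset.prod_apply]
    have hindep : IndepFun (g i) (fun ω => ∏ k ∈ s, g k ω) μ := by
      have h := (hIndep.indepFun_finsetProd_of_notMem hg hi).symm
      rwa [hprodfun] at h
    have hgi : Integrable (g i) μ := by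
      refine Integrable.mono' (integrable_const (C i)) (hg i).aestronglyMeasurable
        (Filter.Eventually.of_forall fun ω => ?_)
      rw [Real.norm_eq_abs]; exact hC i ω
    have hmul := hindep.integral_mul_eq_mul_integral hgi.aestronglyMeasurable (hint s).aestronglyMeasurable
    simp only [Finset.prod_cons]
    calc ∫ ω, g i ω * ∏ k ∈ s, g k ω ∂μ
        = ∫ ω, (g i * fun ω => ∏ k ∈ s, g k ω) ω ∂μ := by rfl
      _ = (∫ ω, g i ω ∂μ) * ∫ ω, ∏ k ∈ s, g k ω ∂μ := hmul
      _ = _ := by rw [ih]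

lemma aux_master {Ω : Type*} [MeasurableSpace Ω] (μ : Measure Ω) [IsProbabilityMeasure μ]
    {n : ℕ} {X : Ω → Fin n → ℝ} (hMeas : ∀ k, Measurable fun ω => X ω k)
    (hIndep : iIndepFun (fun k ω => X ω k) μ)
    (Ic : Fin n → Set ℝ) (hIcm : ∀ k, MeasurableSet (Ic k))
    (A : Set Ω) (Ak : Fin n → Set Ω) (hAk : ∀ k, Ak k = (fun ω => X ω k) ⁻¹' Ic k)
    (hA : A = ⋂ k, Ak k)
    (φ : Fin n → ℝ → ℝ) (hφ : ∀ k, Measurable (φ k))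
    (hC : ∀ k, ∃ C, ∀ x, |(Ic k).indicator (φ k) x| ≤ C) :
    ∫ ω in A, ∏ k, φ k (X ω k) ∂μ = ∏ k, ∫ ω in Ak k, φ k (X ω k) ∂μ := by
  classical
  choose C hCb using hC
  have hAkm : ∀ k, MeasurableSet (Ak k) := fun k => (hAk k) ▸ (hMeas k) (hIcm k)
  have hAm : MeasurableSet A := hA ▸ MeasurableSet.iInter fun k => hAkm k
  set g : Fin n → Ω → ℝ := fun k ω => (Ic k).indicator (φ k) (X ω k) with hg_def
  have hgm : ∀ k, Measurable (g k) := fun k => ((hφ k).indicator (hIcm k)).comp (hMeas k)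
  have hgi : iIndepFun g μ :=
    hIndep.comp (fun k => (Ic k).indicator (φ k)) (fun k => (hφ k).indicator (hIcm k))
  have hmemA : ∀ ω, ω ∈ A ↔ ∀ k, X ω k ∈ Ic k := by
    intro ω
    simp only [hA, Set.mem_iInter]
    exact forall_congr' fun k => by rw [hAk k]; rfl
  have hpoint : ∀ ω, A.indicator (fun ω => ∏ k, φ k (X ω k)) ω = ∏ k, g k ω := by
    intro ω
    by_cases hω : ω ∈ A
    · rw [Set.indicator_of_mem hω]
      refine Finset.prod_congr rfl fun k _ => ?_
      rw [hg_def]; exact (Set.indicator_of_mem ((hmemA ω).1 hω k) _).symm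
    · rw [Set.indicator_of_notMem hω]
      obtain ⟨k, hk⟩ := not_forall.mp ((hmemA ω).not.1 hω)
      exact (Finset.prod_eq_zero (Finset.mem_univ k)
        (by rw [hg_def]; exact Set.indicator_of_notMem hk _)).symm
  have hconv : ∀ k, ∫ ω, g k ω ∂μ = ∫ ω in Ak k, φ k (X ω k) ∂μ := by
    intro k
    rw [← integral_indicator (hAkm k)]
    refine integral_congr_ae (Filter.Eventually.of_forall fun ω => ?_)
    show (Ic k).indicator (φ k) (X ω k) = (Ak k).indicator (fun ω => φ k (X ω k)) ω
    by_cases hx : X ω k ∈ Ic k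
    · rw [Set.indicator_of_mem hx, Set.indicator_of_mem (show ω ∈ Ak k by rw [hAk k]; exact hx)]
    · rw [Set.indicator_of_notMem hx,
        Set.indicator_of_notMem (show ω ∉ Ak k by rw [hAk k]; exact hx)]
  rw [← integral_indicator hAm]
  calc ∫ ω, A.indicator (fun ω => ∏ k, φ k (X ω k)) ω ∂μ
      = ∫ ω, ∏ k, g k ω ∂μ := integral_congr_ae (Filter.Eventually.of_forall hpoint)
    _ = ∏ k, ∫ ω, g k ω ∂μ := aux_integral_prod μ hgi hgm C (fun k ω => hCb k (X ω k)) Finset.univ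
    _ = _ := Finset.prod_congr rfl fun k _ => hconv k

/-- If the components of `X` are mutually independent, then the multivariate range
covariance is the diagonal matrix of the univariate range variances. -/
theorem mrcov_independent_components
    {Ω : Type*} [MeasurableSpace Ω] (μ : Measure Ω) [IsProbabilityMeasure μ]
    {n : ℕ} (X : Ω → Fin n → ℝ)
    (hX : ∀ k, Integrable (fun ω => X ω k) μ)
    (hX2 : ∀ i j, Integrable (fun ω => X ω i * X ω j) μ)
    (hMeas : ∀ k, Measurable (fun ω => X ω k))
    (hIndep : iIndepFun
      (fun k ω => X ω k) μ)
    (p q : Fin n → ℝ) (hp : ∀ k, 0 < p k) (hq : ∀ k, q k < 1) (hpq : ∀ k, p k < q k)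
    (VaR : (Ω → ℝ) → ℝ → ℝ)
    (A : Set Ω) (Ak : Fin n → Set Ω)
    (hAk : ∀ k, Ak k = {ω | VaR (fun ω' => X ω' k) (p k) ≤ X ω k ∧
        X ω k ≤ VaR (fun ω' => X ω' k) (q k)})
    (hA : A = ⋂ k, Ak k)
    (hpos : 0 < μ A) (hposk : ∀ k, 0 < μ (Ak k))
    (m : Fin n → ℝ)
    (hm : ∀ k, m k = (∫ ω in A, X ω k ∂μ) / (μ A).toReal)
    (RVaR RV : Fin n → ℝ)
    (hRVaR : ∀ k, RVaR k = (∫ ω in Ak k, X ω k ∂μ) / (μ (Ak k)).toReal)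
    (hRV : ∀ k, RV k = (∫ ω in Ak k, (X ω k - RVaR k) ^ 2 ∂μ) / (μ (Ak k)).toReal) :
    ∀ i j, (∫ ω in A, (X ω i - m i) * (X ω j - m j) ∂μ) / (μ A).toReal
        = if i = j then RV i else 0 := by
  classical
  set Ic : Fin n → Set ℝ := fun k =>
    Set.Icc (VaR (fun ω' => X ω' k) (p k)) (VaR (fun ω' => X ω' k) (q k)) with hIc_def
  have hAk' : ∀ k, Ak k = (fun ω => X ω k) ⁻¹' Ic k := by
    intro k; rw [hAk k]; ext ω; simp [hIc_def, Set.mem_Icc]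
  have hIcm : ∀ k, MeasurableSet (Ic k) := fun k => measurableSet_Icc
  have hbdd : ∀ (f : ℝ → ℝ), Continuous f → ∀ k, ∃ C, ∀ x, |(Ic k).indicator f x| ≤ C := by
    intro f hf k
    obtain ⟨C, hC⟩ := (isCompact_Icc (a := VaR (fun ω' => X ω' k) (p k))
      (b := VaR (fun ω' => X ω' k) (q k))).exists_bound_of_continuousOn hf.continuousOn
    refine ⟨max C 0, fun x => ?_⟩
    by_cases hx : x ∈ Ic k
    · rw [Set.indicator_of_mem hx]
      exact le_max_of_le_left (by simpa [Real.norm_eq_abs] using hC x hx)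
    · rw [Set.indicator_of_notMem hx]; simp
  have hset1 : ∀ k, ∫ ω in Ak k, (1:ℝ) ∂μ = (μ (Ak k)).toReal := by
    intro k; rw [setIntegral_const]; simp [measureReal_def]
  have hPos : ∀ k, 0 < (μ (Ak k)).toReal :=
    fun k => ENNReal.toReal_pos (hposk k).ne' (measure_ne_top μ _)
  -- one special coordinate
  have M1 : ∀ (i : Fin n) (f : ℝ → ℝ), Continuous f →
      ∫ ω in A, f (X ω i) ∂μ
        = (∫ ω in Ak i, f (X ω i) ∂μ) * ∏ k ∈ Finset.univ.erase i, (μ (Ak k)).toReal := by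
    intro i f hf
    set φ : Fin n → ℝ → ℝ := fun k => if k = i then f else fun _ => 1 with hφ_def
    have hφm : ∀ k, Measurable (φ k) := by
      intro k; by_cases h : k = i <;> simp [hφ_def, h, hf.measurable]
    have hφC : ∀ k, ∃ C, ∀ x, |(Ic k).indicator (φ k) x| ≤ C := by
      intro k; by_cases h : k = i
      · simpa [hφ_def, h] using hbdd f hf k
      · simpa [hφ_def, h] using hbdd (fun _ => 1) continuous_const k
    have key := aux_master μ hMeas hIndep Ic hIcm A Ak hAk' hA φ hφm hφC
    have hL : (∫ ω in A, ∏ k, φ k (X ω k) ∂μ) = ∫ ω in A, f (X ω i) ∂μ := by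
      refine integral_congr_ae (Filter.Eventually.of_forall fun ω => ?_)
      show ∏ k, φ k (X ω k) = f (X ω i)
      have h1 : ∏ k, φ k (X ω k) = φ i (X ω i) :=
        Finset.prod_eq_single i (fun k _ hk => by simp [hφ_def, hk])
          (fun h => absurd (Finset.mem_univ i) h)
      rw [h1]; simp [hφ_def]
    have hR : (∏ k, ∫ ω in Ak k, φ k (X ω k) ∂μ)
        = (∫ ω in Ak i, f (X ω i) ∂μ) * ∏ k ∈ Finset.univ.erase i, (μ (Ak k)).toReal := by
      rw [← Finset.mul_prod_erase Finset.univ _ (Finset.mem_univ i)]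
      congr 1
      · simp [hφ_def]
      · refine Finset.prod_congr rfl fun k hk => ?_
        have hk' : k ≠ i := (Finset.mem_erase.mp hk).1
        simp only [hφ_def, if_neg hk']
        exact hset1 k
    rw [← hL, key, hR]
  -- two special coordinates
  have M2 : ∀ (i j : Fin n), i ≠ j → ∀ (f g : ℝ → ℝ), Continuous f → Continuous g →
      ∫ ω in A, f (X ω i) * g (X ω j) ∂μ
        = (∫ ω in Ak i, f (X ω i) ∂μ) * ((∫ ω in Ak j, g (X ω j) ∂μ) *
            ∏ k ∈ (Finset.univ.erase i).erase j, (μ (Ak k)).toReal) := by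
    intro i j hij f g hf hg
    have hji : j ≠ i := hij.symm
    have hsplit : ∀ (F : Fin n → ℝ), ∏ k, F k
        = F i * (F j * ∏ k ∈ (Finset.univ.erase i).erase j, F k) := by
      intro F
      rw [← Finset.mul_prod_erase Finset.univ F (Finset.mem_univ i),
        ← Finset.mul_prod_erase _ F (Finset.mem_erase.mpr ⟨hji, Finset.mem_univ j⟩)]
    set φ : Fin n → ℝ → ℝ :=
      fun k => if k = i then f else if k = j then g else fun _ => 1 with hφ_def
    have hφm : ∀ k, Measurable (φ k) := by
      intro k; by_cases h : k = i
      · simp [hφ_def, h, hf.measurable]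
      · by_cases h' : k = j <;> simp [hφ_def, h, h', hji, hg.measurable]
    have hφC : ∀ k, ∃ C, ∀ x, |(Ic k).indicator (φ k) x| ≤ C := by
      intro k; by_cases h : k = i
      · simpa [hφ_def, h] using hbdd f hf k
      · by_cases h' : k = j
        · simpa [hφ_def, h, h', hji] using hbdd g hg k
        · simpa [hφ_def, h, h'] using hbdd (fun _ => 1) continuous_const k
    have key := aux_master μ hMeas hIndep Ic hIcm A Ak hAk' hA φ hφm hφC
    have hL : (∫ ω in A, ∏ k, φ k (X ω k) ∂μ) = ∫ ω in A, f (X ω i) * g (X ω j) ∂μ := by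
      refine integral_congr_ae (Filter.Eventually.of_forall fun ω => ?_)
      show ∏ k, φ k (X ω k) = f (X ω i) * g (X ω j)
      rw [hsplit (fun k => φ k (X ω k))]
      have hrest : ∏ k ∈ (Finset.univ.erase i).erase j, φ k (X ω k) = 1 := by
        refine Finset.prod_eq_one fun k hk => ?_
        have hkj := (Finset.mem_erase.mp hk).1
        have hki := (Finset.mem_erase.mp (Finset.mem_erase.mp hk).2).1
        simp [hφ_def, hki, hkj]
      rw [hrest]
      simp [hφ_def, hji]
    have hR : (∏ k, ∫ ω in Ak k, φ k (X ω k) ∂μ)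
        = (∫ ω in Ak i, f (X ω i) ∂μ) * ((∫ ω in Ak j, g (X ω j) ∂μ) *
            ∏ k ∈ (Finset.univ.erase i).erase j, (μ (Ak k)).toReal) := by
      rw [hsplit (fun k => ∫ ω in Ak k, φ k (X ω k) ∂μ)]
      congr 1
      · simp [hφ_def]
      congr 1
      · simp [hφ_def, hji]
      refine Finset.prod_congr rfl fun k hk => ?_
      have hkj := (Finset.mem_erase.mp hk).1
      have hki := (Finset.mem_erase.mp (Finset.mem_erase.mp hk).2).1
      simp only [hφ_def, if_neg hki, if_neg hkj]
      exact hset1 k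
    rw [← hL, key, hR]
  -- measure of A factorizes
  have hμA : ∀ i : Fin n, (μ A).toReal
      = (μ (Ak i)).toReal * ∏ k ∈ Finset.univ.erase i, (μ (Ak k)).toReal := by
    intro i
    have h := M1 i (fun _ => (1:ℝ)) continuous_const
    simp only [setIntegral_const, smul_eq_mul, mul_one] at h
    exact h
  have hPne : ∀ i : Fin n, (∏ k ∈ Finset.univ.erase i, (μ (Ak k)).toReal) ≠ 0 :=
    fun i => (Finset.prod_pos fun k _ => hPos k).ne'
  -- conditional means agree
  have hmR : ∀ k, m k = RVaR k := by
    intro k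
    have h := M1 k (fun x => x) continuous_id
    rw [hm k, hRVaR k, h, hμA k, mul_div_mul_right _ _ (hPne k)]
  -- centered first moments vanish on Ak
  have hzero : ∀ k, ∫ ω in Ak k, (X ω k - m k) ∂μ = 0 := by
    intro k
    rw [integral_sub ((hX k).restrict) (integrable_const _), setIntegral_const, smul_eq_mul,
      hmR k, hRVaR k, measureReal_def, mul_div_cancel₀ _ (hPos k).ne', sub_self]
  intro i j
  by_cases hij : i = j
  · subst hij
    rw [if_pos rfl]
    have h := M1 i (fun x => (x - m i) * (x - m i))
      ((continuous_id.sub continuous_const).mul (continuous_id.sub continuous_const))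
    rw [h, hμA i, mul_div_mul_right _ _ (hPne i), hRV i, ← hmR i]
    congr 1
    refine integral_congr_ae (Filter.Eventually.of_forall fun ω => ?_)
    show (X ω i - m i) * (X ω i - m i) = (X ω i - m i) ^ 2
    exact (pow_two _).symm
  · rw [if_neg hij]
    have h := M2 i j hij (fun x => x - m i) (fun x => x - m j)
      (continuous_id.sub continuous_const) (continuous_id.sub continuous_const)
    rw [h, hzero i, zero_mul, zero_div]
end

section
/- Under the setup of the univariate elliptical RVaR theorem, the range variance satisfies RV_{(p,q)}(X) = (σ²/F_Y(η_p,η_q))·{λ + (c₁/c₁*)·F_{Y*}(η_p,η_q) − δ²·/F_Y(η_p,η_q)}, where λ = c₁[η_p Ḡ(η_p²/2) − η_q Ḡ(η_q²/2)], δ = c₁[Ḡ(η_p²/2) − Ḡ(η_q²/2)], Y* has density c₁* Ḡ(y²/2), and RV_{(p,q)}(X) := E[(X − RVaR_{(p,q)}(X))² | η_p ≤ Y ≤ η_q] with X = μ + σY. (Equivalently, E[Y² | η_p ≤ Y ≤ η_q] = (λ + (c₁/c₁*)F_{Y*}(η_p,η_q))/F_Y(η_p,η_q) and E[Y | η_p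 ≤ Y ≤ η_q] = δ/F_Y(η_p,η_q).) -/
open MeasureTheory intervalIntegral

/-- Auxiliary: the tail integral function `u ↦ ∫_{Ioi u} g` composed with `y ↦ y²/2`
has derivative `-(y * g (y²/2))`, provided `g` is continuous on `[0,∞)` and
integrable on `(0,∞)`. -/
lemma tail_comp_hasDerivAt (g : ℝ → ℝ) (hg_cont : ContinuousOn g (Set.Ici (0:ℝ)))
    (hi : IntegrableOn g (Set.Ioi (0:ℝ))) (y : ℝ) :
    HasDerivAt (fun x : ℝ => ∫ v in Set.Ioi (x ^ 2 / 2), g v)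
      (-(y * g (y ^ 2 / 2))) y := by
  set Gb : ℝ → ℝ := fun u => ∫ v in Set.Ioi u, g v with hGbdef
  have hiIci : IntegrableOn g (Set.Ici (0:ℝ)) :=
    (integrableOn_Ici_iff_integrableOn_Ioi).2 hi
  have hrepr : ∀ u : ℝ, 0 ≤ u → Gb u = Gb 0 - ∫ t in (0:ℝ)..u, g t := by
    intro u hu
    have hsplit := setIntegral_union (f := g) (μ := volume)
      (Set.Ioc_disjoint_Ioi le_rfl) measurableSet_Ioi
      (hi.mono_set Set.Ioc_subset_Ioi_self) (hi.mono_set (Set.Ioi_subset_Ioi hu))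
    rw [Set.Ioc_union_Ioi_eq_Ioi hu] at hsplit
    rw [intervalIntegral.integral_of_le hu]
    simp only [hGbdef]
    rw [hsplit]; ring
  have hII : ∀ u : ℝ, 0 ≤ u → IntervalIntegrable g volume 0 u := by
    intro u hu
    exact (hiIci.mono_set (by rw [Set.uIcc_of_le hu]; exact Set.Icc_subset_Ici_self)).intervalIntegrable
  have hinner : HasDerivAt (fun x : ℝ => x ^ 2 / 2) y y := by
    have := (hasDerivAt_pow 2 y).div_const 2
    exact this.congr_deriv (by push_cast; ring)
  have hsq : ∀ x : ℝ, (0:ℝ) ≤ x ^ 2 / 2 := fun x => by positivity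
  rcases eq_or_ne y 0 with rfl | hy
  · -- at 0 : use one-sided derivative of `Gb` within `Ici 0`
    have hd0 : HasDerivWithinAt (fun x => ∫ t in (0:ℝ)..x, g t) (g 0)
        (Set.Ici (0:ℝ)) 0 :=
      intervalIntegral.integral_hasDerivWithinAt_right (hII 0 le_rfl)
        ⟨Set.Ioi 0, self_mem_nhdsWithin, hi.1⟩
        ((hg_cont.continuousWithinAt Set.self_mem_Ici).mono Set.Ioi_subset_Ici_self)
    have hH0 : HasDerivWithinAt (fun x => Gb 0 - ∫ t in (0:ℝ)..x, g t) (-(g 0))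
        (Set.Ici (0:ℝ)) 0 := hd0.const_sub (Gb 0)
    have hGb0 : HasDerivWithinAt Gb (-(g 0)) (Set.Ici (0:ℝ)) 0 :=
      hH0.congr (fun x hx => hrepr x hx) (hrepr 0 le_rfl)
    have := hGb0.scomp_hasDerivAt_of_eq 0 hinner (fun x => hsq x) (by norm_num)
    simpa [Function.comp_def, hGbdef] using this
  · have hu : 0 < y ^ 2 / 2 := by positivity
    have hd : HasDerivAt (fun x => ∫ t in (0:ℝ)..x, g t) (g (y ^ 2 / 2)) (y ^ 2 / 2) :=
      intervalIntegral.integral_hasDerivAt_right (hII _ hu.le)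
        ⟨Set.Ioi 0, Ioi_mem_nhds hu, hi.1⟩
        (hg_cont.continuousAt (Ici_mem_nhds hu))
    have hH : HasDerivAt (fun x => Gb 0 - ∫ t in (0:ℝ)..x, g t) (-(g (y ^ 2 / 2)))
        (y ^ 2 / 2) := hd.const_sub (Gb 0)
    have hGbd : HasDerivAt Gb (-(g (y ^ 2 / 2))) (y ^ 2 / 2) := by
      refine hH.congr_of_eventuallyEq ?_
      filter_upwards [Ioi_mem_nhds hu] with x hx
      exact hrepr x (le_of_lt hx)
    have := hGbd.scomp y hinner
    simpa [mul_comm, Function.comp_def, hGbdef] using this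

/-- Range variance of a univariate elliptical distribution: with `X = μ + σY`,
`RV_{(p,q)}(X) = (σ²/F_Y(η_p,η_q))·{λ + (c₁/c₁*)·F_{Y*}(η_p,η_q) − δ²/F_Y(η_p,η_q)}`,
where `λ = c₁[η_p Ḡ(η_p²/2) − η_q Ḡ(η_q²/2)]`, `δ = c₁[Ḡ(η_p²/2) − Ḡ(η_q²/2)]`,
and `Y*` has density `c₁* Ḡ(y²/2)`. -/
theorem rv_elliptical
    (g : ℝ → ℝ) (hg_cont : ContinuousOn g (Set.Ici (0:ℝ)))
    (hg_nonneg : ∀ u, 0 ≤ u → 0 ≤ g u)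
    (hg_int : IntegrableOn (fun s => s ^ (-(1:ℝ)/2) * g s) (Set.Ioi (0:ℝ)))
    (hG_int : IntegrableOn (fun s => s ^ (-(1:ℝ)/2) * (∫ v in Set.Ioi s, g v))
      (Set.Ioi (0:ℝ)))
    (c₁ c₁s μ σ ηp ηq : ℝ) (hσ : 0 < σ) (hη : ηp < ηq)
    (hdens_int : Integrable (fun y => c₁ * g (y ^ 2 / 2)))
    (hnorm : (∫ y : ℝ, c₁ * g (y ^ 2 / 2)) = 1)
    (hdenss_int : Integrable (fun y => c₁s * (∫ v in Set.Ioi (y ^ 2 / 2), g v)))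
    (hnorms : (∫ y : ℝ, c₁s * (∫ v in Set.Ioi (y ^ 2 / 2), g v)) = 1)
    (F Fs δ lam mY RV : ℝ)
    (hF : F = ∫ y in ηp..ηq, c₁ * g (y ^ 2 / 2))
    (hFpos : 0 < F)
    (hFs : Fs = ∫ y in ηp..ηq, c₁s * (∫ v in Set.Ioi (y ^ 2 / 2), g v))
    (hδ : δ = c₁ * ((∫ v in Set.Ioi (ηp ^ 2 / 2), g v) -
      (∫ v in Set.Ioi (ηq ^ 2 / 2), g v)))
    (hlam : lam = c₁ * (ηp * (∫ v in Set.Ioi (ηp ^ 2 / 2), g v) -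
      ηq * (∫ v in Set.Ioi (ηq ^ 2 / 2), g v)))
    (hmY : mY = (∫ y in ηp..ηq, (μ + σ * y) * (c₁ * g (y ^ 2 / 2))) / F)
    (hRV : RV = (∫ y in ηp..ηq, (μ + σ * y - mY) ^ 2 * (c₁ * g (y ^ 2 / 2))) / F) :
    RV = σ ^ 2 / F * (lam + c₁ / c₁s * Fs - δ ^ 2 / F) := by
  have hFne : F ≠ 0 := ne_of_gt hFpos
  -- `c₁s ≠ 0`
  have hc1s : c₁s ≠ 0 := by
    rintro rfl
    simp at hnorms
  -- integrability of `g` on `(0,∞)`, extracted from `hnorms`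
  have hex : ∃ y : ℝ, (∫ v in Set.Ioi (y ^ 2 / 2), g v) ≠ 0 := by
    by_contra h
    push_neg at h
    simp only [h, mul_zero, integral_zero] at hnorms
    exact zero_ne_one hnorms
  obtain ⟨y0, hy0⟩ := hex
  have hi0 : IntegrableOn g (Set.Ioi (y0 ^ 2 / 2)) := by
    by_contra h
    exact hy0 (integral_undef h)
  have hicc : IntegrableOn g (Set.Icc 0 (y0 ^ 2 / 2)) :=
    (hg_cont.mono Set.Icc_subset_Ici_self).integrableOn_Icc
  have hi : IntegrableOn g (Set.Ioi (0:ℝ)) := by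
    refine (hicc.union hi0).mono_set ?_
    intro x hx
    rcases le_or_gt x (y0 ^ 2 / 2) with h | h
    · exact Or.inl ⟨le_of_lt hx, h⟩
    · exact Or.inr h
  -- continuity facts
  have hsq : ∀ x : ℝ, (0:ℝ) ≤ x ^ 2 / 2 := fun x => by positivity
  have hgc : Continuous (fun y : ℝ => g (y ^ 2 / 2)) :=
    hg_cont.comp_continuous (by continuity) hsq
  have hcontφ : Continuous fun y : ℝ => c₁ * g (y ^ 2 / 2) := continuous_const.mul hgc
  -- the antiderivative
  have hcomp : ∀ y : ℝ, HasDerivAt (fun x : ℝ => ∫ v in Set.Ioi (x ^ 2 / 2), g v)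
      (-(y * g (y ^ 2 / 2))) y := tail_comp_hasDerivAt g hg_cont hi
  have hK : ∀ y : ℝ, HasDerivAt
      (fun x : ℝ => -(c₁ * (∫ v in Set.Ioi (x ^ 2 / 2), g v)))
      (y * (c₁ * g (y ^ 2 / 2))) y := by
    intro y
    have := ((hcomp y).const_mul c₁).neg
    exact this.congr_deriv (by ring)
  have hGbc : Continuous fun x : ℝ => ∫ v in Set.Ioi (x ^ 2 / 2), g v :=
    continuous_iff_continuousAt.2 fun y => (hcomp y).continuousAt
  -- first moment
  have hA : (∫ y in ηp..ηq, y * (c₁ * g (y ^ 2 / 2))) = δ := by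
    rw [intervalIntegral.integral_eq_sub_of_hasDerivAt (fun y _ => hK y)
      ((continuous_id'.mul hcontφ).intervalIntegrable _ _), hδ]
    ring
  -- second moment via integration by parts
  have hB : (∫ y in ηp..ηq, y ^ 2 * (c₁ * g (y ^ 2 / 2)))
      = lam + c₁ * ∫ y in ηp..ηq, (∫ v in Set.Ioi (y ^ 2 / 2), g v) := by
    have hparts := intervalIntegral.integral_mul_deriv_eq_deriv_mul
      (a := ηp) (b := ηq) (u := fun y : ℝ => y) (u' := fun _ => (1:ℝ))
      (v := fun x : ℝ => -(c₁ * (∫ v in Set.Ioi (x ^ 2 / 2), g v)))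
      (v' := fun y : ℝ => y * (c₁ * g (y ^ 2 / 2)))
      (fun x _ => hasDerivAt_id x) (fun x _ => hK x)
      (intervalIntegrable_const)
      ((continuous_id'.mul hcontφ).intervalIntegrable _ _)
    have h1 : (fun y : ℝ => y ^ 2 * (c₁ * g (y ^ 2 / 2)))
        = fun y : ℝ => y * (y * (c₁ * g (y ^ 2 / 2))) := funext fun y => by ring
    rw [h1, hparts]
    simp only [one_mul]
    rw [intervalIntegral.integral_neg, intervalIntegral.integral_const_mul, hlam]
    ring
  -- conditional mean numerator
  have hM : (∫ y in ηp..ηq, (μ + σ * y) * (c₁ * g (y ^ 2 / 2))) = μ * F + σ * δ := by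
    have h1 : (fun y : ℝ => (μ + σ * y) * (c₁ * g (y ^ 2 / 2)))
        = fun y : ℝ => μ * (c₁ * g (y ^ 2 / 2)) + σ * (y * (c₁ * g (y ^ 2 / 2))) :=
      funext fun y => by ring
    have e1 : (∫ y in ηp..ηq, μ * (c₁ * g (y ^ 2 / 2))) = μ * F := by
      rw [hF]; exact intervalIntegral.integral_const_mul μ _
    have e2 : (∫ y in ηp..ηq, σ * (y * (c₁ * g (y ^ 2 / 2)))) = σ * δ := by
      rw [← hA]; exact intervalIntegral.integral_const_mul σ _
    rw [h1, intervalIntegral.integral_add (f := fun y => μ * (c₁ * g (y ^ 2 / 2)))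
        (g := fun y => σ * (y * (c₁ * g (y ^ 2 / 2))))
        ((continuous_const.mul hcontφ).intervalIntegrable _ _)
        ((continuous_const.mul (continuous_id'.mul hcontφ)).intervalIntegrable _ _),
      e1, e2]
  -- numerator of the range variance
  have hN : (∫ y in ηp..ηq, (μ + σ * y - mY) ^ 2 * (c₁ * g (y ^ 2 / 2)))
      = (μ - mY) ^ 2 * F + 2 * σ * (μ - mY) * δ
        + σ ^ 2 * (lam + c₁ * ∫ y in ηp..ηq, (∫ v in Set.Ioi (y ^ 2 / 2), g v)) := by
    have h1 : (fun y : ℝ => (μ + σ * y - mY) ^ 2 * (c₁ * g (y ^ 2 / 2)))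
        = fun y : ℝ => ((μ - mY) ^ 2 * (c₁ * g (y ^ 2 / 2))
            + (2 * σ * (μ - mY)) * (y * (c₁ * g (y ^ 2 / 2))))
            + σ ^ 2 * (y ^ 2 * (c₁ * g (y ^ 2 / 2))) := funext fun y => by ring
    have e1 : (∫ y in ηp..ηq, (μ - mY) ^ 2 * (c₁ * g (y ^ 2 / 2))) = (μ - mY) ^ 2 * F := by
      rw [hF]; exact intervalIntegral.integral_const_mul _ _
    have e2 : (∫ y in ηp..ηq, (2 * σ * (μ - mY)) * (y * (c₁ * g (y ^ 2 / 2))))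
        = 2 * σ * (μ - mY) * δ := by
      rw [← hA]; exact intervalIntegral.integral_const_mul _ _
    have e3 : (∫ y in ηp..ηq, σ ^ 2 * (y ^ 2 * (c₁ * g (y ^ 2 / 2))))
        = σ ^ 2 * (lam + c₁ * ∫ y in ηp..ηq, (∫ v in Set.Ioi (y ^ 2 / 2), g v)) := by
      rw [← hB]; exact intervalIntegral.integral_const_mul _ _
    rw [h1, intervalIntegral.integral_add
        (f := fun y => (μ - mY) ^ 2 * (c₁ * g (y ^ 2 / 2))
          + (2 * σ * (μ - mY)) * (y * (c₁ * g (y ^ 2 / 2))))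
        (g := fun y => σ ^ 2 * (y ^ 2 * (c₁ * g (y ^ 2 / 2))))
        (((continuous_const.mul hcontφ).add
          (continuous_const.mul (continuous_id'.mul hcontφ))).intervalIntegrable _ _)
        ((continuous_const.mul ((continuous_pow 2).mul hcontφ)).intervalIntegrable _ _),
      intervalIntegral.integral_add
        (f := fun y => (μ - mY) ^ 2 * (c₁ * g (y ^ 2 / 2)))
        (g := fun y => (2 * σ * (μ - mY)) * (y * (c₁ * g (y ^ 2 / 2))))
        ((continuous_const.mul hcontφ).intervalIntegrable _ _)
        ((continuous_const.mul (continuous_id'.mul hcontφ)).intervalIntegrable _ _),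
      e1, e2, e3]
  -- relate `Fs` to the tail integral
  have hT : c₁ / c₁s * Fs = c₁ * ∫ y in ηp..ηq, (∫ v in Set.Ioi (y ^ 2 / 2), g v) := by
    rw [hFs, intervalIntegral.integral_const_mul]
    field_simp
  have hmY' : mY = (μ * F + σ * δ) / F := by rw [hmY, hM]
  rw [hRV, hN, hmY', hT]
  field_simp
  ring
end
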